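/- Define the multiplicative function f# by f#(2^{1+α}) = ((√2 − 1)/3)·(1 − (−2)^{1+α}) for α ≥ 0, f#(p^α) = 1 + ((p − √p)/(p+1))·((−p)^α − 1) for odd primes p and α ≥ 0, and f#(1) = 1. Then the Dirichlet convolution (f# * φ)(2^{1+α}) = 2^{(1+α)/2 + ⌊α/2⌋} and (f# * φ)(p^α) = p^{α/2 + ⌊α/2⌋} for odd primes p. -/

import Mathlib

open Finset

private def Sf (f : ℕ → ℝ) (p n : ℕ) : ℝ :=
  ∑ i ∈ range (n + 1), f (p ^ i) * (Nat.totient (p ^ (n - i)) : ℝ)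

private lemma divisors_eq (f : ℕ → ℝ) {p : ℕ} (pp : p.Prime) (n : ℕ) :
    (∑ d ∈ (p ^ n).divisors, f d * (Nat.totient (p ^ n / d) : ℝ)) = Sf f p n := by
  rw [Nat.sum_divisors_prime_pow pp]
  refine Finset.sum_congr rfl fun i hi => ?_
  rw [Finset.mem_range] at hi
  rw [Nat.pow_div (by omega) pp.pos]

private lemma tot_step {p : ℕ} (pp : p.Prime) (m : ℕ) :
    (Nat.totient (p ^ (m + 2)) : ℝ) = p * (Nat.totient (p ^ (m + 1)) : ℝ) := by
  rw [show m + 2 = (m + 1) + 1 from rfl, Nat.totient_prime_pow_succ pp,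
    Nat.totient_prime_pow_succ pp]
  push_cast [Nat.cast_sub pp.one_lt.le]
  ring

private lemma Sf_rec (f : ℕ → ℝ) {p : ℕ} (pp : p.Prime) (n : ℕ) :
    Sf f p (n + 1) = p * Sf f p n + f (p ^ (n + 1)) - f (p ^ n) := by
  have h1 : Sf f p (n + 1) =
      (∑ i ∈ range n, f (p ^ i) * (Nat.totient (p ^ (n + 1 - i)) : ℝ))
        + f (p ^ n) * (Nat.totient p : ℝ) + f (p ^ (n + 1)) := by
    rw [Sf, Finset.sum_range_succ, Finset.sum_range_succ]
    have e1 : n + 1 - n = 1 := by omega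
    have e2 : n + 1 - (n + 1) = 0 := by omega
    rw [e1, e2]
    simp
  have h2 : Sf f p n =
      (∑ i ∈ range n, f (p ^ i) * (Nat.totient (p ^ (n - i)) : ℝ)) + f (p ^ n) := by
    rw [Sf, Finset.sum_range_succ]
    simp
  have h3 : ∀ i ∈ range n, f (p ^ i) * (Nat.totient (p ^ (n + 1 - i)) : ℝ) =
      p * (f (p ^ i) * (Nat.totient (p ^ (n - i)) : ℝ)) := by
    intro i hi
    rw [Finset.mem_range] at hi
    obtain ⟨m, hm⟩ : ∃ m, n - i = m + 1 := ⟨n - i - 1, by omega⟩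
    have h4 : n + 1 - i = m + 2 := by omega
    rw [h4, hm, tot_step pp]
    ring
  have h5 : (Nat.totient p : ℝ) = p - 1 := by
    rw [Nat.totient_prime pp]
    push_cast [Nat.cast_sub pp.one_lt.le]
    ring
  rw [h1, Finset.sum_congr rfl h3, ← Finset.mul_sum, h5]
  have h6 : (∑ i ∈ range n, f (p ^ i) * (Nat.totient (p ^ (n - i)) : ℝ))
      = Sf f p n - f (p ^ n) := by rw [h2]; ring
  rw [h6]
  ring

private lemma odd_case (f : ℕ → ℝ) (hf1 : f 1 = 1)
    {p : ℕ} (pp : p.Prime)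
    (hfp : ∀ α : ℕ, f (p ^ α) = 1 + (((p : ℝ) - Real.sqrt p) / ((p : ℝ) + 1)) *
        ((-(p : ℝ)) ^ α - 1)) :
    ∀ n : ℕ, Sf f p n = (p : ℝ) ^ ((n : ℝ) / 2 + ((n / 2 : ℕ) : ℝ)) := by
  have hp0 : (0 : ℝ) < p := by exact_mod_cast pp.pos
  have hp1 : (p : ℝ) + 1 ≠ 0 := by positivity
  have S0 : Sf f p 0 = 1 := by simp [Sf, hf1]
  have S1 : Sf f p 1 = Real.sqrt p := by
    have hv : f p = 1 - ((p : ℝ) - Real.sqrt p) := by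
      have h := hfp 1
      rw [pow_one] at h
      rw [h]
      field_simp
      ring
    rw [Sf, Finset.sum_range_succ, Finset.sum_range_succ]
    norm_num [hf1, hv]
    rw [Nat.totient_prime pp]
    push_cast [Nat.cast_sub pp.one_lt.le]
    ring
  have Sstep : ∀ n : ℕ, Sf f p (n + 2) = (p : ℝ) ^ 2 * Sf f p n := by
    intro n
    rw [show n + 2 = n + 1 + 1 from rfl, Sf_rec f pp (n + 1), Sf_rec f pp n,
      hfp n, hfp (n + 1), hfp (n + 1 + 1)]
    ring
  have Rstep : ∀ n : ℕ,
      (p : ℝ) ^ (((n + 2 : ℕ) : ℝ) / 2 + (((n + 2) / 2 : ℕ) : ℝ))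
        = (p : ℝ) ^ 2 * (p : ℝ) ^ ((n : ℝ) / 2 + ((n / 2 : ℕ) : ℝ)) := by
    intro n
    have hdiv : (n + 2) / 2 = n / 2 + 1 := by omega
    have hexp : ((n + 2 : ℕ) : ℝ) / 2 + (((n + 2) / 2 : ℕ) : ℝ)
        = ((n : ℝ) / 2 + ((n / 2 : ℕ) : ℝ)) + 2 := by
      rw [hdiv]; push_cast; ring
    rw [hexp, Real.rpow_add hp0]
    rw [show (2 : ℝ) = ((2 : ℕ) : ℝ) by norm_num, Real.rpow_natCast]
    ring
  suffices H : ∀ n : ℕ, Sf f p n = (p : ℝ) ^ ((n : ℝ) / 2 + ((n / 2 : ℕ) : ℝ)) ∧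
      Sf f p (n + 1) = (p : ℝ) ^ (((n + 1 : ℕ) : ℝ) / 2 + (((n + 1) / 2 : ℕ) : ℝ)) by
    exact fun n => (H n).1
  intro n
  induction n with
  | zero =>
    constructor
    · rw [S0]; norm_num
    · rw [S1]
      norm_num
      rw [Real.sqrt_eq_rpow]
  | succ n ih =>
    refine ⟨ih.2, ?_⟩
    rw [show n + 1 + 1 = n + 2 from rfl, Sstep n, Rstep n, ih.1]

private lemma even_case (f : ℕ → ℝ) (hf1 : f 1 = 1)
    (hf2 : ∀ α : ℕ, f (2 ^ (1 + α)) =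
      ((Real.sqrt 2 - 1) / 3) * (1 - (-2 : ℝ) ^ (1 + α))) :
    ∀ α : ℕ, Sf f 2 (1 + α) =
      (2 : ℝ) ^ (((1 + α : ℕ) : ℝ) / 2 + ((α / 2 : ℕ) : ℝ)) := by
  have pp : Nat.Prime 2 := Nat.prime_two
  have hf2' : ∀ k : ℕ, 1 ≤ k → f (2 ^ k) =
      ((Real.sqrt 2 - 1) / 3) * (1 - (-2 : ℝ) ^ k) := by
    intro k hk
    obtain ⟨α, rfl⟩ : ∃ α, k = 1 + α := ⟨k - 1, by omega⟩
    exact hf2 α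
  have S1 : Sf f 2 1 = Real.sqrt 2 := by
    have hv : f 2 = Real.sqrt 2 - 1 := by
      have h := hf2' 1 le_rfl
      norm_num at h
      linarith
    rw [Sf, Finset.sum_range_succ, Finset.sum_range_succ]
    norm_num [hf1, hv]
  have S2 : Sf f 2 2 = 2 := by
    rw [show (2 : ℕ) = 1 + 1 from rfl, Sf_rec f pp 1, S1,
      hf2' 1 le_rfl, hf2' 2 (by norm_num)]
    norm_num
    ring
  have Sstep : ∀ n : ℕ, 1 ≤ n → Sf f 2 (n + 2) = 4 * Sf f 2 n := by
    intro n hn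
    rw [show n + 2 = n + 1 + 1 from rfl, Sf_rec f pp (n + 1), Sf_rec f pp n,
      hf2' n hn, hf2' (n + 1) (by omega), hf2' (n + 1 + 1) (by omega)]
    push_cast
    ring
  have Rstep : ∀ α : ℕ,
      (2 : ℝ) ^ (((1 + (α + 2) : ℕ) : ℝ) / 2 + (((α + 2) / 2 : ℕ) : ℝ))
        = 4 * (2 : ℝ) ^ (((1 + α : ℕ) : ℝ) / 2 + ((α / 2 : ℕ) : ℝ)) := by
    intro α
    have hdiv : (α + 2) / 2 = α / 2 + 1 := by omega
    have hexp : ((1 + (α + 2) : ℕ) : ℝ) / 2 + (((α + 2) / 2 : ℕ) : ℝ)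
        = (((1 + α : ℕ) : ℝ) / 2 + ((α / 2 : ℕ) : ℝ)) + 2 := by
      rw [hdiv]; push_cast; ring
    rw [hexp, Real.rpow_add (by norm_num : (0:ℝ) < 2)]
    rw [show (2 : ℝ) ^ (2 : ℝ) = 4 by
      rw [show (2 : ℝ) = ((2 : ℕ) : ℝ) by norm_num, Real.rpow_natCast]; norm_num]
    ring
  suffices H : ∀ α : ℕ, (Sf f 2 (1 + α) =
      (2 : ℝ) ^ (((1 + α : ℕ) : ℝ) / 2 + ((α / 2 : ℕ) : ℝ))) ∧
      (Sf f 2 (1 + (α + 1)) =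
      (2 : ℝ) ^ (((1 + (α + 1) : ℕ) : ℝ) / 2 + (((α + 1) / 2 : ℕ) : ℝ))) by
    exact fun α => (H α).1
  intro α
  induction α with
  | zero =>
    constructor
    · rw [S1]
      norm_num
      rw [Real.sqrt_eq_rpow]
    · rw [show 1 + (0 + 1) = 2 from rfl, S2]
      norm_num
  | succ α ih =>
    refine ⟨ih.2, ?_⟩
    have e : 1 + (α + 1 + 1) = (1 + α) + 2 := by omega
    rw [e, Sstep (1 + α) (by omega)]
    rw [show (1 + α) + 2 = 1 + (α + 2) from by omega] at *
    rw [show α + 1 + 1 = α + 2 from rfl, Rstep α, ih.1]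

theorem fsharp_conv_totient (f : ℕ → ℝ) (hf1 : f 1 = 1)
    (hf2 : ∀ α : ℕ, f (2 ^ (1 + α)) =
      ((Real.sqrt 2 - 1) / 3) * (1 - (-2 : ℝ) ^ (1 + α)))
    (hfp : ∀ p α : ℕ, p.Prime → Odd p →
      f (p ^ α) = 1 + (((p : ℝ) - Real.sqrt p) / ((p : ℝ) + 1)) *
        ((-(p : ℝ)) ^ α - 1)) :
    (∀ α : ℕ,
      (∑ d ∈ (2 ^ (1 + α)).divisors, f d * (Nat.totient (2 ^ (1 + α) / d) : ℝ)) =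
        (2 : ℝ) ^ (((1 + α : ℕ) : ℝ) / 2 + ((α / 2 : ℕ) : ℝ))) ∧
    ∀ p α : ℕ, p.Prime → Odd p →
      (∑ d ∈ (p ^ α).divisors, f d * (Nat.totient (p ^ α / d) : ℝ)) =
        (p : ℝ) ^ ((α : ℝ) / 2 + ((α / 2 : ℕ) : ℝ)) := by
  constructor
  · intro α
    rw [divisors_eq f Nat.prime_two]
    exact even_case f hf1 hf2 α
  · intro p α pp hodd
    rw [divisors_eq f pp]
    have := odd_case f hf1 pp (fun β => hfp p β pp hodd) α
    simpa using this
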